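/- Multiplicativity of u: suppose a, b, c, d are integers with b, d > 0, gcd(b,d) = 1, ab even, and cd even. Then u(a/b + c/d) = u(a/b)·u(c/d), where u(p/q) = (1/(2q))·Σ_{x=0}^{2q-1} exp(πi p x²/q) for p/q in lowest terms with q > 0. -/

import Mathlib

open Finset

/-- `u(r) = (1/(2q))·Σ_{x=0}^{2q-1} exp(πi·p·x²/q)` where `r = p/q` in lowest terms
with `q > 0` (well-defined on ℚ by invariance under common scaling). -/
noncomputable def u (r : ℚ) : ℂ :=
  (1 / (2 * (r.den : ℂ))) * ∑ x ∈ Finset.range (2 * r.den),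
    Complex.exp (Real.pi * Complex.I * r.num * (x : ℂ) ^ 2 / r.den)

/-! ### Auxiliary machinery for quadratic Gauss sums -/

/-- The basic exponential `e(p,q,m) = exp(πi·p·m²/q)`. -/
noncomputable def ee (p : ℤ) (q : ℕ) (m : ℤ) : ℂ :=
  Complex.exp (Real.pi * Complex.I * p * m ^ 2 / q)

/-- The half Gauss sum. -/
noncomputable def T (p : ℤ) (q : ℕ) : ℂ := ∑ x ∈ range q, ee p q x

/-- The full Gauss sum over `0 ≤ x < 2q`. -/
noncomputable def S (p : ℤ) (q : ℕ) : ℂ := ∑ x ∈ range (2 * q), ee p q x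

/-- The normalized Gauss sum. -/
noncomputable def UU (p : ℤ) (q : ℕ) : ℂ := (1 / (2 * (q : ℂ))) * S p q

lemma exp_eq_of (X Y : ℂ) (n : ℤ) (h : X = Y + n * (2 * Real.pi * Complex.I)) :
    Complex.exp X = Complex.exp Y := by
  rw [h, Complex.exp_add, Complex.exp_int_mul_two_pi_mul_I, mul_one]

lemma ee_eq (p : ℤ) (q : ℕ) (hq : q ≠ 0) (m m' n : ℤ)
    (h : p * m ^ 2 = p * m' ^ 2 + 2 * n * q) : ee p q m = ee p q m' := by
  have hqC : (q : ℂ) ≠ 0 := Nat.cast_ne_zero.mpr hq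
  have hC : (p : ℂ) * m ^ 2 = p * m' ^ 2 + 2 * n * q := by exact_mod_cast h
  apply exp_eq_of _ _ n
  field_simp
  linear_combination hC

/-- congruence mod `2q`, unconditional -/
lemma ee_congr (p : ℤ) (q : ℕ) (hq : q ≠ 0) (m m' t : ℤ) (h : m = m' + 2 * q * t) :
    ee p q m = ee p q m' := by
  apply ee_eq p q hq m m' (p * t * (m + m'))
  subst h; ring

/-- congruence mod `q`, assuming `p*q` even -/
lemma ee_congr2 (p : ℤ) (q : ℕ) (hq : q ≠ 0) (s : ℤ) (hpq : p * q = 2 * s)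
    (m m' t : ℤ) (h : m = m' + q * t) : ee p q m = ee p q m' := by
  apply ee_eq p q hq m m' (p * t * m' + s * t ^ 2)
  subst h; linear_combination (t ^ 2 * (q : ℤ)) * hpq

lemma period_shift (f : ℕ → ℂ) (n : ℕ) (hf : ∀ x, f (x + n) = f x) (k i : ℕ) :
    f (k * n + i) = f i := by
  induction k with
  | zero => simp
  | succ k ih2 =>
    have h3 : (k + 1) * n + i = (k * n + i) + n := by ring
    rw [h3, hf, ih2]

lemma period_sum (f : ℕ → ℂ) (n : ℕ) (hf : ∀ x, f (x + n) = f x) (k : ℕ) :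
    ∑ x ∈ range (k * n), f x = k * ∑ x ∈ range n, f x := by
  induction k with
  | zero => simp
  | succ k ih =>
    have h1 : (k + 1) * n = k * n + n := by ring
    rw [h1, Finset.sum_range_add, ih]
    simp only [period_shift f n hf k]
    push_cast; ring

lemma sum_zmod (n : ℕ) [NeZero n] (f : ℕ → ℂ) :
    ∑ y : ZMod n, f (ZMod.val y) = ∑ x ∈ range n, f x := by
  apply Finset.sum_nbij' (fun y => ZMod.val y) (fun x => (x : ZMod n))
  · intro a _; exact Finset.mem_range.mpr (ZMod.val_lt a)
  · intro a _; exact Finset.mem_univ _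
  · intro a _; simp [ZMod.natCast_val, ZMod.cast_id]
  · intro a ha; exact ZMod.val_cast_of_lt (Finset.mem_range.mp ha)
  · intro a _; rfl

/-- if `p*q` is even, the full sum is twice the half sum -/
lemma S_eq_two_T (p : ℤ) (q : ℕ) (hq : q ≠ 0) (s : ℤ) (hpq : p * q = 2 * s) :
    S p q = 2 * T p q := by
  have := period_sum (fun x : ℕ => ee p q x) q (by
    intro x
    apply ee_congr2 p q hq s hpq _ _ 1
    push_cast; ring) 2
  simpa [S, T] using this

/-- `ee` is invariant under scaling `p,q` by `k` -/
lemma ee_scale (p : ℤ) (q k : ℕ) (hq : q ≠ 0) (hk : k ≠ 0) (m : ℤ) :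
    ee ((k : ℤ) * p) (k * q) m = ee p q m := by
  unfold ee
  congr 1
  have hqC : (q : ℂ) ≠ 0 := Nat.cast_ne_zero.mpr hq
  have hkC : (k : ℂ) ≠ 0 := Nat.cast_ne_zero.mpr hk
  push_cast
  field_simp

lemma UU_scale (p : ℤ) (q k : ℕ) (hq : q ≠ 0) (hk : k ≠ 0) :
    UU ((k : ℤ) * p) (k * q) = UU p q := by
  have hqC : (q : ℂ) ≠ 0 := Nat.cast_ne_zero.mpr hq
  have hkC : (k : ℂ) ≠ 0 := Nat.cast_ne_zero.mpr hk
  unfold UU S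
  have h1 : ∀ x : ℕ, ee ((k : ℤ) * p) (k * q) (x : ℤ) = ee p q (x : ℤ) :=
    fun x => ee_scale p q k hq hk _
  simp only [h1]
  have h2 : 2 * (k * q) = k * (2 * q) := by ring
  rw [h2, period_sum (fun x : ℕ => ee p q x) (2 * q) (by
    intro x
    apply ee_congr p q hq _ _ 1
    push_cast; ring) k]
  push_cast
  field_simp

lemma u_eq_UU (r : ℚ) : u r = UU r.num r.den := by
  unfold u UU S ee
  norm_num

/-- `u` evaluated on an arbitrary (not necessarily reduced) fraction. -/
lemma u_div (p : ℤ) (q : ℕ) (hq : q ≠ 0) : u ((p : ℚ) / q) = UU p q := by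
  set r : ℚ := (p : ℚ) / q with hr
  have hden : (r.den : ℤ) ∣ (q : ℤ) := by
    have : r = Rat.divInt p q := by rw [Rat.divInt_eq_div]; push_cast [hr]; ring
    rw [this]; exact Rat.den_dvd p q
  obtain ⟨k, hk⟩ := hden
  have hdenpos : (0 : ℤ) < r.den := by exact_mod_cast r.pos
  have hkpos : 0 < k := by
    rcases lt_trichotomy k 0 with h | h | h
    · nlinarith [hk, Nat.pos_of_ne_zero hq,
        (show (0 : ℤ) < q by exact_mod_cast Nat.pos_of_ne_zero hq)]
    · simp [h] at hk; omega
    · exact h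
  obtain ⟨K, rfl⟩ : ∃ K : ℕ, k = (K : ℤ) := ⟨k.toNat, (Int.toNat_of_nonneg hkpos.le).symm⟩
  have hqK : q = K * r.den := by exact_mod_cast hk.trans (mul_comm _ _)
  have hKne : K ≠ 0 := by rintro rfl; simp at hqK; omega
  have hp : p = (K : ℤ) * r.num := by
    have hqQ : ((q : ℚ)) ≠ 0 := by exact_mod_cast hq
    have h1 : (p : ℚ) = r * q := by rw [hr]; field_simp
    have h2 : r * (r.den : ℚ) = r.num := Rat.mul_den_eq_num r
    have : (p : ℚ) = ((K : ℤ) * r.num : ℤ) := by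
      push_cast
      rw [h1, ← h2]
      have : (q : ℚ) = (K : ℚ) * (r.den : ℚ) := by exact_mod_cast hqK
      rw [this]; ring
    exact_mod_cast this
  rw [u_eq_UU, hp, hqK, UU_scale r.num r.den K (by positivity) hKne]

/-- The key factorization of the exponential under the substitution `x = dy + bz`. -/
lemma ee_factor (a c : ℤ) (b d : ℕ) (hb : b ≠ 0) (hd : d ≠ 0) (s t : ℤ)
    (hab : a * b = 2 * s) (hcd : c * d = 2 * t) (y z : ℤ) :
    ee (a * d + c * b) (b * d) ((d : ℤ) * y + (b : ℤ) * z)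
      = ee a b ((d : ℤ) * y) * ee c d ((b : ℤ) * z) := by
  unfold ee
  rw [← Complex.exp_add]
  set n : ℤ := a * d * y * z + c * b * y * z + s * z ^ 2 + t * y ^ 2 with hn
  apply exp_eq_of _ _ n
  have key : (a * d + c * b) * ((d : ℤ) * y + b * z) ^ 2
      = (a * ((d : ℤ) * y) ^ 2) * d + (c * ((b : ℤ) * z) ^ 2) * b + 2 * n * (b * d) := by
    rw [hn]
    linear_combination ((b : ℤ) * d * z ^ 2) * hab + ((b : ℤ) * d * y ^ 2) * hcd
  have keyC : ((a : ℂ) * d + c * b) * ((d : ℂ) * y + b * z) ^ 2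
      = (a * ((d : ℂ) * y) ^ 2) * d + (c * ((b : ℂ) * z) ^ 2) * b + 2 * n * (b * d) := by
    exact_mod_cast key
  have hbC : (b : ℂ) ≠ 0 := Nat.cast_ne_zero.mpr hb
  have hdC : (d : ℂ) ≠ 0 := Nat.cast_ne_zero.mpr hd
  push_cast
  field_simp
  linear_combination keyC

/-- Multiplication by a unit `d` mod `b` permutes the half Gauss sum. -/
lemma unit_sum (a : ℤ) (b : ℕ) (hb : b ≠ 0) (d : ℕ) (hdb : Nat.Coprime d b)
    (s : ℤ) (hab : a * b = 2 * s) :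
    ∑ y ∈ range b, ee a b ((d : ℤ) * y) = ∑ y ∈ range b, ee a b (y : ℤ) := by
  haveI : NeZero b := ⟨hb⟩
  rw [← sum_zmod b (fun x => ee a b ((d : ℤ) * x)), ← sum_zmod b (fun x => ee a b (x : ℤ))]
  set uu := ZMod.unitOfCoprime d hdb with huu
  apply Fintype.sum_bijective (fun y => (uu : ZMod b) * y) (Units.mulLeft_bijective uu)
  intro y
  have hcast : (((d * y.val : ℕ)) : ZMod b) = (((((uu : ZMod b) * y).val : ℕ)) : ZMod b) := by
    push_cast
    simp only [ZMod.natCast_val, ZMod.cast_id, huu, ZMod.coe_unitOfCoprime]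
  have hmod := (ZMod.natCast_eq_natCast_iff _ _ _).mp hcast
  obtain ⟨t, ht⟩ := hmod.dvd
  apply ee_congr2 a b hb s hab _ _ (-t)
  push_cast at ht
  linarith

/-- The CRT splitting of the half Gauss sum. -/
lemma crt_sum (a c : ℤ) (b d : ℕ) (hb : b ≠ 0) (hd : d ≠ 0) (hbd : Nat.Coprime b d)
    (s t : ℤ) (hab : a * b = 2 * s) (hcd : c * d = 2 * t) :
    ∑ x ∈ range (b * d), ee (a * d + c * b) (b * d) (x : ℤ)
      = (∑ y ∈ range b, ee a b ((d : ℤ) * y)) * (∑ z ∈ range d, ee c d ((b : ℤ) * z)) := by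
  haveI : NeZero b := ⟨hb⟩
  haveI : NeZero d := ⟨hd⟩
  haveI : NeZero (b * d) := ⟨mul_ne_zero hb hd⟩
  set p : ℤ := a * d + c * b with hp
  have hpbd : p * (b * d) = 2 * (s * d ^ 2 + t * b ^ 2) := by
    rw [hp]; linear_combination ((d : ℤ) ^ 2) * hab + ((b : ℤ) ^ 2) * hcd
  set φ : ZMod b × ZMod d → ZMod (b * d) :=
    fun yz => ((d * yz.1.val + b * yz.2.val : ℕ) : ZMod (b * d)) with hφ
  have hinj : Function.Injective φ := by
    rintro ⟨y1, z1⟩ ⟨y2, z2⟩ h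
    simp only [hφ] at h
    have hmod := (ZMod.natCast_eq_natCast_iff _ _ _).mp h
    have hy : y1 = y2 := by
      have h1 : d * y1.val ≡ d * y2.val [MOD b] := by
        have h2 := hmod.of_mul_right d
        have h3 : d * y1.val + b * z1.val ≡ d * y1.val + 0 [MOD b] :=
          Nat.ModEq.add_left _ ((Nat.modEq_zero_iff_dvd).mpr ⟨z1.val, rfl⟩)
        have h4 : d * y2.val + b * z2.val ≡ d * y2.val + 0 [MOD b] :=
          Nat.ModEq.add_left _ ((Nat.modEq_zero_iff_dvd).mpr ⟨z2.val, rfl⟩)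
        simpa using (h3.symm.trans h2).trans h4
      have h5 := h1.cancel_left_of_coprime (by simpa [Nat.Coprime] using hbd)
      exact ZMod.val_injective _ (Nat.ModEq.eq_of_lt_of_lt h5 (ZMod.val_lt _) (ZMod.val_lt _))
    have hz : z1 = z2 := by
      have h1 : b * z1.val ≡ b * z2.val [MOD d] := by
        have h2 := hmod.of_mul_left b
        have h3 : d * y1.val + b * z1.val ≡ 0 + b * z1.val [MOD d] :=
          Nat.ModEq.add_right _ ((Nat.modEq_zero_iff_dvd).mpr ⟨y1.val, rfl⟩)
        have h4 : d * y2.val + b * z2.val ≡ 0 + b * z2.val [MOD d] :=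
          Nat.ModEq.add_right _ ((Nat.modEq_zero_iff_dvd).mpr ⟨y2.val, rfl⟩)
        simpa using (h3.symm.trans h2).trans h4
      have h5 := h1.cancel_left_of_coprime (by simpa [Nat.Coprime] using hbd.symm)
      exact ZMod.val_injective _ (Nat.ModEq.eq_of_lt_of_lt h5 (ZMod.val_lt _) (ZMod.val_lt _))
    rw [hy, hz]
  have hbij : Function.Bijective φ := by
    rw [Fintype.bijective_iff_injective_and_card]
    exact ⟨hinj, by simp [ZMod.card]⟩
  rw [← sum_zmod (b * d) (fun x => ee p (b * d) (x : ℤ))]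
  rw [← Fintype.sum_bijective φ hbij (fun yz => ee p (b * d) (((φ yz).val : ℤ)))
      (fun x => ee p (b * d) (x.val : ℤ)) (fun _ => rfl)]
  have hpt : ∀ yz : ZMod b × ZMod d, ee p (b * d) (((φ yz).val : ℤ))
      = ee a b ((d : ℤ) * yz.1.val) * ee c d ((b : ℤ) * yz.2.val) := by
    rintro ⟨y, z⟩
    have step1 : ee p (b * d) (((φ (y, z)).val : ℤ))
        = ee p (b * d) ((d : ℤ) * y.val + (b : ℤ) * z.val) := by
      have hcast : (((φ (y, z)).val : ℕ) : ZMod (b * d))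
          = ((d * y.val + b * z.val : ℕ) : ZMod (b * d)) := by
        simp [hφ, ZMod.natCast_val, ZMod.cast_id]
      have hmod := (ZMod.natCast_eq_natCast_iff _ _ _).mp hcast
      obtain ⟨tt, htt⟩ := hmod.dvd
      apply ee_congr2 p (b * d) (mul_ne_zero hb hd) _ hpbd _ _ (-tt)
      push_cast at htt ⊢
      linarith
    rw [step1, hp]
    exact ee_factor a c b d hb hd s t hab hcd _ _
  simp only [hpt]
  rw [← sum_zmod b (fun x => ee a b ((d : ℤ) * x)), ← sum_zmod d (fun x => ee c d ((b : ℤ) * x)),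
    Finset.sum_mul_sum, Fintype.sum_prod_type]

/-- Multiplicativity for the normalized Gauss sums. -/
lemma UU_mul (a c : ℤ) (b d : ℕ) (hb : b ≠ 0) (hd : d ≠ 0) (hbd : Nat.Coprime b d)
    (s t : ℤ) (hab : a * b = 2 * s) (hcd : c * d = 2 * t) :
    UU (a * d + c * b) (b * d) = UU a b * UU c d := by
  have hbC : (b : ℂ) ≠ 0 := Nat.cast_ne_zero.mpr hb
  have hdC : (d : ℂ) ≠ 0 := Nat.cast_ne_zero.mpr hd
  have hS1 : S (a * d + c * b) (b * d) = 2 * T (a * d + c * b) (b * d) :=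
    S_eq_two_T _ _ (mul_ne_zero hb hd) (s * d ^ 2 + t * b ^ 2)
      (by push_cast; linear_combination ((d : ℤ) ^ 2) * hab + ((b : ℤ) ^ 2) * hcd)
  have hS2 : S a b = 2 * T a b := S_eq_two_T a b hb s hab
  have hS3 : S c d = 2 * T c d := S_eq_two_T c d hd t hcd
  have hT : T (a * d + c * b) (b * d) = T a b * T c d := by
    unfold T
    rw [crt_sum a c b d hb hd hbd s t hab hcd,
      unit_sum a b hb d hbd.symm s hab, unit_sum c d hd b hbd t hcd]
  unfold UU
  rw [hS1, hS2, hS3, hT]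
  push_cast
  field_simp

/-- Multiplicativity of `u`: if `b, d > 0`, `gcd(b,d) = 1`, `ab` even and `cd` even,
then `u(a/b + c/d) = u(a/b)·u(c/d)`. -/
theorem u_mul (a b c d : ℤ) (hb : 0 < b) (hd : 0 < d) (hbd : Int.gcd b d = 1)
    (hab : Even (a * b)) (hcd : Even (c * d)) :
    u ((a : ℚ) / b + (c : ℚ) / d) = u ((a : ℚ) / b) * u ((c : ℚ) / d) := by
  obtain ⟨B, rfl⟩ : ∃ B : ℕ, b = (B : ℤ) := ⟨b.toNat, (Int.toNat_of_nonneg hb.le).symm⟩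
  obtain ⟨D, rfl⟩ : ∃ D : ℕ, d = (D : ℤ) := ⟨d.toNat, (Int.toNat_of_nonneg hd.le).symm⟩
  have hB : B ≠ 0 := by rintro rfl; simp at hb
  have hD : D ≠ 0 := by rintro rfl; simp at hd
  have hBD : Nat.Coprime B D := by
    have : Int.gcd (B : ℤ) (D : ℤ) = Nat.gcd B D := Int.gcd_natCast_natCast B D
    rwa [this] at hbd
  obtain ⟨s, hs⟩ := hab
  obtain ⟨t, ht⟩ := hcd
  have hs' : a * (B : ℤ) = 2 * s := by linarith
  have ht' : c * (D : ℤ) = 2 * t := by linarith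
  have hsum : (a : ℚ) / (B : ℤ) + (c : ℚ) / (D : ℤ)
      = ((a * D + c * B : ℤ) : ℚ) / ((B * D : ℕ) : ℚ) := by
    have hBQ : ((B : ℤ) : ℚ) ≠ 0 := by exact_mod_cast hB
    have hDQ : ((D : ℤ) : ℚ) ≠ 0 := by exact_mod_cast hD
    field_simp
    push_cast; ring
  have e1 : u ((a : ℚ) / ((B : ℤ) : ℚ)) = UU a B := by
    have : (((B : ℤ) : ℚ)) = ((B : ℕ) : ℚ) := by push_cast; ring
    rw [this, u_div a B hB]
  have e2 : u ((c : ℚ) / ((D : ℤ) : ℚ)) = UU c D := by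
    have : (((D : ℤ) : ℚ)) = ((D : ℕ) : ℚ) := by push_cast; ring
    rw [this, u_div c D hD]
  rw [hsum, u_div (a * D + c * B) (B * D) (mul_ne_zero hB hD), e1, e2]
  exact UU_mul a c B D hB hD hBD s t hs' ht'
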